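/- Let K and T be positive integers and let α be a real number with 0 < α < 1. Suppose that no nonzero polynomial p ∈ ℝ[X] of degree at most T−1 with all coefficients in {−1, 0, 1} satisfies p(α) = 0. Then the FOFE encoding map with forgetting factor α over the vocabulary Fin K is injective on the set of all sequences of length at most T. (Sufficient condition for unique decodability of FOFE codes.) -/

import Mathlib

/-- The FOFE code of a word sequence `w = (w_1, …, w_T)` over the vocabulary `Fin K`
with forgetting factor `α`: `z_0 = 0`, `z_t = α • z_{t-1} + e_{w_t}`. -/
def fofe {K : ℕ} (α : ℝ) (w : List (Fin K)) : Fin K → ℝ :=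
  w.foldl (fun z a => α • z + Pi.single a (1 : ℝ)) 0

lemma fofe_foldl {K : ℕ} (α : ℝ) : ∀ (w : List (Fin K)) (z : Fin K → ℝ),
    w.foldl (fun z a => α • z + Pi.single a (1 : ℝ)) z
      = α ^ w.length • z + w.foldl (fun z a => α • z + Pi.single a (1 : ℝ)) 0
  | [], z => by simp
  | a :: w, z => by
    simp only [List.foldl_cons, List.length_cons]
    rw [fofe_foldl α w (α • z + Pi.single a 1),
        fofe_foldl α w (α • (0 : Fin K → ℝ) + Pi.single a 1)]
    simp [smul_add, smul_smul, pow_succ, add_assoc, mul_comm]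

lemma fofe_eq_sum {K : ℕ} (α : ℝ) (w : List (Fin K)) (j : Fin K) :
    fofe α w j = ∑ n ∈ Finset.range w.length,
      (if w.reverse[n]? = some j then α ^ n else 0) := by
  induction w with
  | nil => simp [fofe]
  | cons a w ih =>
    have h : fofe α (a :: w) = α ^ w.length • (Pi.single a (1:ℝ) : Fin K → ℝ) + fofe α w := by
      show List.foldl _ _ (a :: w) = _
      rw [List.foldl_cons, fofe_foldl]
      simp [fofe]
    rw [congrFun h j]
    simp only [List.length_cons, Finset.sum_range_succ, List.reverse_cons,
      Pi.add_apply]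
    rw [ih]
    have hlen : w.reverse.length = w.length := by simp
    have h1 : ∀ n ∈ Finset.range w.length,
        (if (w.reverse ++ [a])[n]? = some j then α ^ n else 0)
          = (if w.reverse[n]? = some j then α ^ n else 0) := by
      intro n hn
      rw [List.getElem?_append_left (by simpa using Finset.mem_range.mp hn)]
    rw [Finset.sum_congr rfl h1]
    have h2 : (w.reverse ++ [a])[w.length]? = some a := by
      rw [← hlen]; exact List.getElem?_concat_length
    rw [h2]
    simp [Pi.single_apply, Pi.smul_apply, add_comm]
    by_cases hja : j = a <;> simp [hja, eq_comm]

/-- If `α ∈ (0, 1)` is not a root of any nonzero polynomial of degree at most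
`T - 1` with coefficients in `{-1, 0, 1}`, then the FOFE encoding with forgetting
factor `α` is injective on sequences over `Fin K` of length at most `T`. -/
theorem fofe_injective_of_not_root (K T : ℕ) (hK : 0 < K) (hT : 0 < T) (α : ℝ)
    (hα0 : 0 < α) (hα1 : α < 1)
    (hroot : ¬ ∃ p : Polynomial ℝ, p ≠ 0 ∧ p.natDegree ≤ T - 1 ∧
      (∀ n, p.coeff n ∈ ({-1, 0, 1} : Set ℝ)) ∧ p.eval α = 0) :
    ∀ w w' : List (Fin K), w.length ≤ T → w'.length ≤ T →
      fofe α w = fofe α w' → w = w' := by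
  intro w w' hw hw' heq
  by_contra hne
  have hrev : w.reverse ≠ w'.reverse := fun h => hne (by simpa using congrArg List.reverse h)
  have hex : ∃ n : ℕ, w.reverse[n]? ≠ w'.reverse[n]? := by
    by_contra hall
    push_neg at hall
    exact hrev (List.ext_getElem? hall)
  obtain ⟨n0, hn0⟩ := hex
  obtain ⟨j, hj⟩ : ∃ j : Fin K,
      (if w.reverse[n0]? = some j then (1:ℝ) else 0)
        - (if w'.reverse[n0]? = some j then (1:ℝ) else 0) ≠ 0 := by
    cases hget : w.reverse[n0]? with
    | some a =>
        refine ⟨a, ?_⟩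
        have h2 : ¬ (w'.reverse[n0]? = some a) := fun h => hn0 (hget.trans h.symm)
        rw [if_pos rfl, if_neg h2]
        norm_num
    | none =>
        cases hget' : w'.reverse[n0]? with
        | none => exact absurd (hget.trans hget'.symm) hn0
        | some b =>
            refine ⟨b, ?_⟩
            rw [if_neg (by simp : ¬ ((none : Option (Fin K)) = some b)), if_pos rfl]
            norm_num
  set d : ℕ → ℝ := fun n =>
    (if w.reverse[n]? = some j then (1:ℝ) else 0)
      - (if w'.reverse[n]? = some j then (1:ℝ) else 0) with hd
  have hn0T : n0 < T := by
    by_contra hge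
    push_neg at hge
    have h1 : w.reverse[n0]? = none := by
      rw [List.getElem?_eq_none_iff]; simpa using le_trans hw hge
    have h2 : w'.reverse[n0]? = none := by
      rw [List.getElem?_eq_none_iff]; simpa using le_trans hw' hge
    exact hn0 (h1.trans h2.symm)
  set p : Polynomial ℝ := ∑ n ∈ Finset.range T, Polynomial.C (d n) * Polynomial.X ^ n with hp
  have hdeg : p.natDegree ≤ T - 1 := by
    apply Polynomial.natDegree_sum_le_of_forall_le
    intro i hi
    calc (Polynomial.C (d i) * Polynomial.X ^ i).natDegree
        ≤ (Polynomial.X ^ i : Polynomial ℝ).natDegree := Polynomial.natDegree_C_mul_le _ _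
      _ = i := Polynomial.natDegree_X_pow i
      _ ≤ T - 1 := Nat.le_sub_one_of_lt (Finset.mem_range.mp hi)
  have hcoeff : ∀ m, m < T → p.coeff m = d m := by
    intro m hm
    rw [hp, Polynomial.finset_sum_coeff]
    simp only [Polynomial.coeff_C_mul, Polynomial.coeff_X_pow]
    rw [Finset.sum_eq_single m]
    · simp
    · intro b _ hbm; simp [Ne.symm hbm]
    · intro hmem; exact absurd (Finset.mem_range.mpr hm) hmem
  have hcoeff0 : ∀ m, ¬ m < T → p.coeff m = 0 := by
    intro m hm
    apply Polynomial.coeff_eq_zero_of_natDegree_lt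
    calc p.natDegree ≤ T - 1 := hdeg
      _ < T := Nat.sub_lt hT one_pos
      _ ≤ m := le_of_not_gt hm
  refine hroot ⟨p, ?_, hdeg, ?_, ?_⟩
  · intro h0
    apply hj
    have := hcoeff n0 hn0T
    rw [h0, Polynomial.coeff_zero] at this
    exact this.symm
  · intro n
    by_cases hn : n < T
    · rw [hcoeff n hn]
      show ((if w.reverse[n]? = some j then (1:ℝ) else 0)
        - (if w'.reverse[n]? = some j then (1:ℝ) else 0)) ∈ ({-1, 0, 1} : Set ℝ)
      rcases em (w.reverse[n]? = some j) with h1 | h1 <;>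
        rcases em (w'.reverse[n]? = some j) with h2 | h2
      · rw [if_pos h1, if_pos h2]; norm_num
      · rw [if_pos h1, if_neg h2]; norm_num
      · rw [if_neg h1, if_pos h2]; norm_num
      · rw [if_neg h1, if_neg h2]; norm_num
    · rw [hcoeff0 n hn]; simp
  · have hev : p.eval α = ∑ n ∈ Finset.range T, d n * α ^ n := by
      rw [hp]; simp [Polynomial.eval_finset_sum]
    have hsum : ∀ (v : List (Fin K)), v.length ≤ T →
        (∑ n ∈ Finset.range T, (if v.reverse[n]? = some j then α ^ n else 0))
          = fofe α v j := by
      intro v hv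
      rw [fofe_eq_sum]
      refine (Finset.sum_subset (Finset.range_subset_range.mpr hv) ?_).symm
      intro x _ hx
      have hnone : v.reverse[x]? = none := by
        rw [List.getElem?_eq_none_iff]; simpa using Finset.mem_range.not.mp hx
      rw [if_neg (by rw [hnone]; simp)]
    have hkey : p.eval α = fofe α w j - fofe α w' j := by
      rw [hev, ← hsum w hw, ← hsum w' hw', ← Finset.sum_sub_distrib]
      refine Finset.sum_congr rfl fun n _ => ?_
      show ((if w.reverse[n]? = some j then (1:ℝ) else 0)
        - (if w'.reverse[n]? = some j then (1:ℝ) else 0)) * α ^ n = _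
      rcases em (w.reverse[n]? = some j) with h1 | h1 <;>
        rcases em (w'.reverse[n]? = some j) with h2 | h2
      · rw [if_pos h1, if_pos h2, if_pos h1, if_pos h2]; ring
      · rw [if_pos h1, if_neg h2, if_pos h1, if_neg h2]; ring
      · rw [if_neg h1, if_pos h2, if_neg h1, if_pos h2]; ring
      · rw [if_neg h1, if_neg h2, if_neg h1, if_neg h2]; ring
    rw [hkey, heq, sub_self]
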